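/- Let f(x_1,…,x_r) = Σ_{i∈[r]} c_i(x_i) + Σ_{1≤i<j≤r} c_{ij}(x_i, x_j) with c_i : D_i → ℝ₊ and c_{ij} : D_i × D_j → ℝ₊ ∪ {+∞}, c_{ij} = c_{ji}, and suppose f satisfies the joint winner property and is Z-free. Let U := {(i,a) : i ∈ [r], a ∈ D_i} and let f̂ : {0,1}^U → ℝ ∪ {+∞} be defined by f̂(x̂) := f(x) if x̂ is the indicator vector of some x ∈ D_1 × ⋯ × D_r and f̂(x̂) := +∞ otherwise. Then f̂ is M♮₂-convex, i.e., f̂ can be written as the sum of two M♮-convex functions on {0,1}^U. -/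

import Mathlib

open Finset
open scoped Classical

/-- M♮-convexity for functions on `{0,1}^U` (identified with finite subsets of `U`) with
values in `ℝ ∪ {+∞}`. -/
def MnatConvex {ι : Type*} [DecidableEq ι] (f : Finset ι → WithTop ℝ) : Prop :=
  ∀ X Y : Finset ι, ∀ i ∈ X \ Y,
    (f (X.erase i) + f (insert i Y) ≤ f X + f Y) ∨
    (∃ j ∈ Y \ X, f (insert j (X.erase i)) + f ((insert i Y).erase j) ≤ f X + f Y)

/-- The minimum of a family of values in `ℝ ∪ {+∞}` is attained at least twice. -/
def MinTwice {κ : Type*} (w : κ → WithTop ℝ) : Prop :=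
  ∃ p q : κ, p ≠ q ∧ (∀ t, w p ≤ w t) ∧ w p = w q

/-- The joint winner property for the binary costs `c_{ij}`. -/
def JWP (r : ℕ) (d : Fin r → ℕ)
    (cb : ∀ i j : Fin r, Fin (d i) → Fin (d j) → WithTop ℝ) : Prop :=
  ∀ i j k : Fin r, i ≠ j → j ≠ k → i ≠ k →
    ∀ (a : Fin (d i)) (b : Fin (d j)) (c : Fin (d k)),
      min (cb j k b c) (cb i k a c) ≤ cb i j a b

/-- Z-freeness: `|argmin{c_{ij}(a,c), c_{ij}(a,d), c_{ij}(b,c), c_{ij}(b,d)}| ≥ 2` for all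
distinct `i, j ∈ [r]`, distinct `a, b ∈ D_i` and distinct `c, d ∈ D_j`. -/
def ZFree (r : ℕ) (d : Fin r → ℕ)
    (cb : ∀ i j : Fin r, Fin (d i) → Fin (d j) → WithTop ℝ) : Prop :=
  ∀ i j : Fin r, i ≠ j → ∀ a b : Fin (d i), a ≠ b → ∀ c e : Fin (d j), c ≠ e →
    MinTwice ![cb i j a c, cb i j a e, cb i j b c, cb i j b e]

/-- The indicator vector (as a subset of `U = {(i,a) : i ∈ [r], a ∈ D_i}`) of an assignment
`x ∈ D_1 × ⋯ × D_r`: it contains `(i,a)` iff `x_i = a`. -/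
def enc (r : ℕ) (d : Fin r → ℕ) (x : ∀ i : Fin r, Fin (d i)) :
    Finset ((i : Fin r) × Fin (d i)) :=
  Finset.univ.image fun i : Fin r => ⟨i, x i⟩

/-- The VCSP objective `f(x) = Σ_{i∈[r]} c_i(x_i) + Σ_{1≤i<j≤r} c_{ij}(x_i, x_j)`. -/
noncomputable def fval (r : ℕ) (d : Fin r → ℕ) (cu : ∀ i : Fin r, Fin (d i) → ℝ)
    (cb : ∀ i j : Fin r, Fin (d i) → Fin (d j) → WithTop ℝ)
    (x : ∀ i : Fin r, Fin (d i)) : WithTop ℝ :=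
  (∑ i : Fin r, ((cu i (x i) : ℝ) : WithTop ℝ)) +
    ∑ p ∈ (Finset.univ ×ˢ Finset.univ : Finset (Fin r × Fin r)).filter
        (fun p => p.1 < p.2),
      cb p.1 p.2 (x p.1) (x p.2)

/-- `f̂ : {0,1}^U → ℝ ∪ {+∞}`: `f̂(x̂) = f(x)` if `x̂` is the indicator vector of some `x`,
and `+∞` otherwise. -/
noncomputable def fhat (r : ℕ) (d : Fin r → ℕ) (cu : ∀ i : Fin r, Fin (d i) → ℝ)
    (cb : ∀ i j : Fin r, Fin (d i) → Fin (d j) → WithTop ℝ)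
    (S : Finset ((i : Fin r) × Fin (d i))) : WithTop ℝ :=
  if h : ∃ x : ∀ i : Fin r, Fin (d i), enc r d x = S then fval r d cu cb h.choose else ⊤


set_option linter.unusedSectionVars false
set_option linter.unusedVariables false
set_option maxHeartbeats 1000000

lemma multiset_exists_max {M : Multiset (WithTop ℝ)} (h : M ≠ 0) :
    ∃ m ∈ M, ∀ x ∈ M, x ≤ m := by
  have hne : M.toFinset.Nonempty := by
    rcases Multiset.exists_mem_of_ne_zero h with ⟨a, ha⟩
    exact ⟨a, Multiset.mem_toFinset.mpr ha⟩
  obtain ⟨m, hm, hmax⟩ := M.toFinset.exists_max_image id hne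
  exact ⟨m, Multiset.mem_toFinset.mp hm,
    fun x hx => hmax x (Multiset.mem_toFinset.mpr hx)⟩

/-- Layer-cake domination for multisets in `WithTop ℝ`. -/
lemma msum_le_of_counts_aux (n : ℕ) : ∀ (M₁ M₂ : Multiset (WithTop ℝ)), M₁.card ≤ n →
    (∀ x ∈ M₁, (0:WithTop ℝ) ≤ x) → (∀ x ∈ M₂, (0:WithTop ℝ) ≤ x) →
    (∀ α : WithTop ℝ, 0 < α →
      (M₁.filter (fun x => α ≤ x)).card ≤ (M₂.filter (fun x => α ≤ x)).card) →
    M₁.sum ≤ M₂.sum := by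
  induction n with
  | zero =>
    intro M₁ M₂ hcard h1 h2 _
    have : M₁ = 0 := Multiset.card_eq_zero.mp (Nat.le_zero.mp hcard)
    subst this
    simpa using Multiset.sum_nonneg h2
  | succ n ih =>
    intro M₁ M₂ hcard h1 h2 hc
    rcases eq_or_ne M₁ 0 with rfl | hne
    · simpa using Multiset.sum_nonneg h2
    obtain ⟨m, hmem, hmax⟩ := multiset_exists_max hne
    rcases le_or_gt m 0 with hm0 | hm0
    · -- all elements are 0
      have : M₁.sum = 0 := Multiset.sum_eq_zero (fun x hx =>
        le_antisymm ((hmax x hx).trans hm0) (h1 x hx))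
      rw [this]
      exact Multiset.sum_nonneg h2
    · -- m > 0, find a counterpart in M₂
      have hcnt := hc m hm0
      have hm1 : m ∈ M₁.filter (fun x => m ≤ x) :=
        Multiset.mem_filter.mpr ⟨hmem, le_refl m⟩
      have h2ne : (M₂.filter (fun x => m ≤ x)) ≠ 0 := by
        intro h0
        rw [h0] at hcnt
        simp at hcnt
        have : m ∉ M₁.filter (fun x => m ≤ x) := fun _ => lt_irrefl m (hcnt m hmem)
        exact this hm1
      obtain ⟨m₂, hm₂f⟩ := Multiset.exists_mem_of_ne_zero h2ne
      obtain ⟨hm₂, hmle⟩ := Multiset.mem_filter.mp hm₂f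
      set M₁' := M₁.erase m with hM₁'
      set M₂' := M₂.erase m₂ with hM₂'
      have e1 : m ::ₘ M₁' = M₁ := Multiset.cons_erase hmem
      have e2 : m₂ ::ₘ M₂' = M₂ := Multiset.cons_erase hm₂
      have hcard' : M₁'.card ≤ n := by
        have := Multiset.card_cons m M₁'
        rw [e1] at this
        omega
      have hsum : M₁'.sum ≤ M₂'.sum := by
        apply ih
        · exact hcard'
        · intro x hx; exact h1 x (Multiset.mem_of_mem_erase hx)
        · intro x hx; exact h2 x (Multiset.mem_of_mem_erase hx)
        · intro α hα
          rcases le_or_gt α m with hle | hgt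
          · have c1 : (M₁.filter (fun x => α ≤ x)).card
                = (M₁'.filter (fun x => α ≤ x)).card + 1 := by
              rw [← e1, Multiset.filter_cons_of_pos _ hle, Multiset.card_cons]
            have c2 : (M₂.filter (fun x => α ≤ x)).card
                = (M₂'.filter (fun x => α ≤ x)).card + 1 := by
              rw [← e2, Multiset.filter_cons_of_pos _ (hle.trans hmle), Multiset.card_cons]
            have := hc α hα
            omega
          · have : M₁'.filter (fun x => α ≤ x) = 0 := by
              rw [Multiset.filter_eq_nil]
              intro x hx
              exact not_le.mpr (lt_of_le_of_lt (hmax x (Multiset.mem_of_mem_erase hx)) hgt)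
            simp [this]
      calc M₁.sum = m + M₁'.sum := by rw [← e1, Multiset.sum_cons]
        _ ≤ m₂ + M₂'.sum := add_le_add hmle hsum
        _ = M₂.sum := by rw [← e2, Multiset.sum_cons]

lemma msum_le_of_counts (M₁ M₂ : Multiset (WithTop ℝ))
    (h1 : ∀ x ∈ M₁, (0:WithTop ℝ) ≤ x) (h2 : ∀ x ∈ M₂, (0:WithTop ℝ) ≤ x)
    (hc : ∀ α : WithTop ℝ, 0 < α →
      (M₁.filter (fun x => α ≤ x)).card ≤ (M₂.filter (fun x => α ≤ x)).card) :
    M₁.sum ≤ M₂.sum :=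
  msum_le_of_counts_aux M₁.card M₁ M₂ le_rfl h1 h2 hc
set_option linter.unusedSectionVars false
set_option linter.unusedVariables false
set_option maxHeartbeats 1000000

section Ultra
variable {V : Type*} [DecidableEq V] [Fintype V]

noncomputable def cls (a : V → V → WithTop ℝ) (α : WithTop ℝ) (w : V) : Finset V :=
  Finset.univ.filter (fun u => α ≤ a w u)

variable {a : V → V → WithTop ℝ}

lemma mem_cls {α : WithTop ℝ} {w u : V} : u ∈ cls a α w ↔ α ≤ a w u := by
  simp [cls]

lemma self_mem_cls (hdiag : ∀ u, a u u = ⊤) {α : WithTop ℝ} {w : V} :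
    w ∈ cls a α w := mem_cls.mpr (by rw [hdiag]; exact le_top)

lemma htrans (htri : ∀ u v w, min (a u w) (a w v) ≤ a u v)
    {α : WithTop ℝ} {u v w : V} (h1 : α ≤ a u w) (h2 : α ≤ a w v) : α ≤ a u v :=
  le_trans (le_min h1 h2) (htri u v w)

lemma cls_eq_of_mem (hsym : ∀ u v, a u v = a v u)
    (htri : ∀ u v w, min (a u w) (a w v) ≤ a u v)
    {α : WithTop ℝ} {w v : V} (hv : v ∈ cls a α w) : cls a α v = cls a α w := by
  have hwv : α ≤ a w v := mem_cls.mp hv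
  apply Finset.ext
  intro u
  simp only [mem_cls]
  constructor
  · intro h; exact htrans htri hwv h
  · intro h
    have hvw : α ≤ a v w := by rwa [hsym v w]
    exact htrans htri hvw h

lemma cls_mono {α β : WithTop ℝ} (hab : α ≤ β) (w : V) : cls a β w ⊆ cls a α w := by
  intro u hu
  exact mem_cls.mpr (le_trans hab (mem_cls.mp hu))

lemma partition_card (hsym : ∀ u v, a u v = a v u) (hdiag : ∀ u, a u u = ⊤)
    (htri : ∀ u v w, min (a u w) (a w v) ≤ a u v)
    (β : WithTop ℝ) (G Z : Finset V) (hG : ∀ x ∈ G, cls a β x ⊆ G) (hZ : Z ⊆ G) :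
    Z.card = ∑ D ∈ G.image (fun x => cls a β x), (Z ∩ D).card := by
  rw [← Finset.card_biUnion]
  · congr 1
    apply Finset.ext
    intro z
    simp only [Finset.mem_biUnion, Finset.mem_image]
    constructor
    · intro hz
      exact ⟨cls a β z, ⟨z, hZ hz, rfl⟩, Finset.mem_inter.mpr ⟨hz, self_mem_cls hdiag⟩⟩
    · rintro ⟨D, _, hzD⟩
      exact (Finset.mem_inter.mp hzD).1
  · intro D hD D' hD' hne
    obtain ⟨x, hx, rfl⟩ := Finset.mem_image.mp hD
    obtain ⟨x', hx', rfl⟩ := Finset.mem_image.mp hD'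
    rw [Function.onFun, Finset.disjoint_left]
    intro u hu hu'
    have h1 : u ∈ cls a β x := (Finset.mem_inter.mp hu).2
    have h2 : u ∈ cls a β x' := (Finset.mem_inter.mp hu').2
    exact hne ((cls_eq_of_mem hsym htri h1).symm.trans (cls_eq_of_mem hsym htri h2))

lemma exists_heavy (hsym : ∀ u v, a u v = a v u) (hdiag : ∀ u, a u u = ⊤)
    (htri : ∀ u v w, min (a u w) (a w v) ≤ a u v)
    (β : WithTop ℝ) (G X Y : Finset V) (hG : ∀ x ∈ G, cls a β x ⊆ G)
    (hlt : (X ∩ G).card ≤ (Y ∩ G).card)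
    (D₀ : Finset V) (hD₀ : D₀ ∈ G.image (fun x => cls a β x))
    (hD₀strict : (Y ∩ D₀).card < (X ∩ D₀).card) :
    ∃ D ∈ G.image (fun x => cls a β x), (X ∩ D).card < (Y ∩ D).card := by
  by_contra hall
  push_neg at hall
  have hXc := partition_card hsym hdiag htri β G (X ∩ G) hG Finset.inter_subset_right
  have hYc := partition_card hsym hdiag htri β G (Y ∩ G) hG Finset.inter_subset_right
  have hDsub : ∀ D ∈ G.image (fun x => cls a β x), D ⊆ G := by
    intro D hD
    obtain ⟨x, hx, rfl⟩ := Finset.mem_image.mp hD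
    exact hG x hx
  have hinter : ∀ D ∈ G.image (fun x => cls a β x),
      (X ∩ G) ∩ D = X ∩ D ∧ (Y ∩ G) ∩ D = Y ∩ D := by
    intro D hD
    constructor <;>
    · rw [Finset.inter_assoc]
      congr 1
      exact Finset.inter_eq_right.mpr (hDsub D hD)
  have hsum : ∑ D ∈ G.image (fun x => cls a β x), ((Y ∩ G) ∩ D).card
      < ∑ D ∈ G.image (fun x => cls a β x), ((X ∩ G) ∩ D).card := by
    apply Finset.sum_lt_sum
    · intro D hD
      rw [(hinter D hD).1, (hinter D hD).2]
      exact hall D hD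
    · exact ⟨D₀, hD₀, by rw [(hinter D₀ hD₀).1, (hinter D₀ hD₀).2]; exact hD₀strict⟩
  rw [← hXc, ← hYc] at hsum
  omega

lemma descent_base (hsym : ∀ u v, a u v = a v u) (hdiag : ∀ u, a u u = ⊤)
    (htri : ∀ u v w, min (a u w) (a w v) ≤ a u v)
    (X Y : Finset V) (Λ : Finset (WithTop ℝ))
    (β : WithTop ℝ) (w : V)
    (hH : Λ.filter (fun l => 0 < l ∧ β < l) = ∅)
    (hxy : (X ∩ cls a β w).card < (Y ∩ cls a β w).card) :
    ∃ j, j ∈ Y ∧ j ∉ X ∧ j ∈ cls a β w ∧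
      ∀ l ∈ Λ, 0 < l → β ≤ l → (X ∩ cls a l j).card < (Y ∩ cls a l j).card := by
  have hj : ∃ j ∈ Y ∩ cls a β w, j ∉ X := by
    by_contra hcon
    push_neg at hcon
    have hsub : Y ∩ cls a β w ⊆ X ∩ cls a β w := by
      intro u hu
      exact Finset.mem_inter.mpr ⟨hcon u hu, (Finset.mem_inter.mp hu).2⟩
    exact absurd (Finset.card_le_card hsub) (by omega)
  obtain ⟨j, hjmem, hjX⟩ := hj
  obtain ⟨hjY, hjC⟩ := Finset.mem_inter.mp hjmem
  refine ⟨j, hjY, hjX, hjC, ?_⟩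
  intro l hl hl0 hβl
  have hlβ : l = β := by
    by_contra hne
    have : β < l := lt_of_le_of_ne hβl (Ne.symm hne)
    have : l ∈ Λ.filter (fun l => 0 < l ∧ β < l) := Finset.mem_filter.mpr ⟨hl, hl0, this⟩
    rw [hH] at this
    exact absurd this (Finset.notMem_empty l)
  subst hlβ
  rwa [cls_eq_of_mem hsym htri hjC]

lemma descent (hsym : ∀ u v, a u v = a v u) (hdiag : ∀ u, a u u = ⊤)
    (htri : ∀ u v w, min (a u w) (a w v) ≤ a u v)
    (X Y : Finset V) (Λ : Finset (WithTop ℝ)) :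
    ∀ n : ℕ, ∀ β : WithTop ℝ, 0 < β → ∀ w : V,
      (Λ.filter (fun l => 0 < l ∧ β < l)).card ≤ n →
      (X ∩ cls a β w).card < (Y ∩ cls a β w).card →
      ∃ j, j ∈ Y ∧ j ∉ X ∧ j ∈ cls a β w ∧
        ∀ l ∈ Λ, 0 < l → β ≤ l → (X ∩ cls a l j).card < (Y ∩ cls a l j).card := by
  intro n
  induction n with
  | zero =>
    intro β hβ w hcard hxy
    have hH : Λ.filter (fun l => 0 < l ∧ β < l) = ∅ :=
      Finset.card_eq_zero.mp (Nat.le_zero.mp hcard)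
    exact descent_base hsym hdiag htri X Y Λ β w hH hxy
  | succ n ih =>
    intro β hβ w hcard hxy
    rcases (Λ.filter (fun l => 0 < l ∧ β < l)).eq_empty_or_nonempty with hH | hH
    · exact descent_base hsym hdiag htri X Y Λ β w hH hxy
    · set H := Λ.filter (fun l => 0 < l ∧ β < l) with hHdef
      set β' := H.min' hH with hβ'def
      have hβ'H : β' ∈ H := H.min'_mem hH
      rw [hHdef, Finset.mem_filter] at hβ'H
      have hβ'Λ := hβ'H.1
      have hβ'pos := hβ'H.2.1
      have hββ' := hβ'H.2.2
      set G := cls a β w with hGdef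
      have hGc : ∀ x ∈ G, cls a β' x ⊆ G := by
        intro x hx
        calc cls a β' x ⊆ cls a β x := cls_mono (le_of_lt hββ') x
          _ = G := cls_eq_of_mem hsym htri hx
      -- find a heavy cluster
      have hD₀mem : cls a β' w ∈ G.image (fun x => cls a β' x) :=
        Finset.mem_image.mpr ⟨w, self_mem_cls hdiag, rfl⟩
      have hheavy : ∃ D ∈ G.image (fun x => cls a β' x), (X ∩ D).card < (Y ∩ D).card := by
        by_contra hall
        push_neg at hall
        have hXc := partition_card hsym hdiag htri β' G (X ∩ G) hGc Finset.inter_subset_right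
        have hYc := partition_card hsym hdiag htri β' G (Y ∩ G) hGc Finset.inter_subset_right
        have hDsub : ∀ D ∈ G.image (fun x => cls a β' x), D ⊆ G := by
          intro D hD
          obtain ⟨x, hx, rfl⟩ := Finset.mem_image.mp hD
          exact hGc x hx
        have hle : ∑ D ∈ G.image (fun x => cls a β' x), ((Y ∩ G) ∩ D).card
            ≤ ∑ D ∈ G.image (fun x => cls a β' x), ((X ∩ G) ∩ D).card := by
          apply Finset.sum_le_sum
          intro D hD
          have h1 : (X ∩ G) ∩ D = X ∩ D := by
            rw [Finset.inter_assoc]; congr 1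
            exact Finset.inter_eq_right.mpr (hDsub D hD)
          have h2 : (Y ∩ G) ∩ D = Y ∩ D := by
            rw [Finset.inter_assoc]; congr 1
            exact Finset.inter_eq_right.mpr (hDsub D hD)
          rw [h1, h2]
          exact hall D hD
        rw [← hXc, ← hYc] at hle
        omega
      obtain ⟨D, hDP, hDheavy⟩ := hheavy
      obtain ⟨x', hx'G, rfl⟩ := Finset.mem_image.mp hDP
      have hcard' : (Λ.filter (fun l => 0 < l ∧ β' < l)).card ≤ n := by
        have hss : Λ.filter (fun l => 0 < l ∧ β' < l) ⊂ H := by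
          constructor
          · intro l hl
            rw [Finset.mem_filter] at hl ⊢
            exact ⟨hl.1, hl.2.1, lt_trans hββ' hl.2.2⟩
          · intro hsup
            have : β' ∈ Λ.filter (fun l => 0 < l ∧ β' < l) := hsup (H.min'_mem hH)
            rw [Finset.mem_filter] at this
            exact absurd this.2.2 (lt_irrefl β')
        have := Finset.card_lt_card hss
        omega
      obtain ⟨j, hjY, hjX, hjC, hconc⟩ := ih β' hβ'pos x' hcard' hDheavy
      refine ⟨j, hjY, hjX, hGc x' hx'G hjC, ?_⟩
      intro l hl hl0 hβl
      rcases eq_or_lt_of_le hβl with rfl | hlt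
      · have hcj : cls a β j = G := cls_eq_of_mem hsym htri (hGc x' hx'G hjC)
        rw [hcj]; exact hxy
      · have hlH : l ∈ H := Finset.mem_filter.mpr ⟨hl, hl0, hlt⟩
        have : β' ≤ l := H.min'_le l hlH
        exact hconc l hl hl0 this
end Ultra

lemma jchoice {V : Type*} [DecidableEq V] [Fintype V] {a : V → V → WithTop ℝ}
    (hsym : ∀ u v, a u v = a v u) (hdiag : ∀ u, a u u = ⊤)
    (htri : ∀ u v w, min (a u w) (a w v) ≤ a u v)
    (X Y : Finset V) (hXY : X.card = Y.card)
    (i : V) (hiX : i ∈ X) (hiY : i ∉ Y) :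
    ∃ j, j ∈ Y ∧ j ∉ X ∧ ∀ α : WithTop ℝ, 0 < α →
      α ≤ a i j ∨
      ((X ∩ cls a α j).card < (Y ∩ cls a α j).card ∧
       (Y ∩ cls a α i).card < (X ∩ cls a α i).card) := by
  classical
  set Λ := Finset.image (fun p : V × V => a p.1 p.2) (Finset.univ ×ˢ Finset.univ) with hΛdef
  have hmemΛ : ∀ u v : V, a u v ∈ Λ :=
    fun u v => Finset.mem_image.mpr ⟨(u, v), by simp, rfl⟩
  have htopΛ : (⊤ : WithTop ℝ) ∈ Λ := by rw [← hdiag i]; exact hmemΛ i i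
  have htoppos : (0 : WithTop ℝ) < ⊤ := by
    exact_mod_cast WithTop.coe_lt_top (0 : ℝ)
  have hlamne : ∀ α : WithTop ℝ, (Λ.filter (fun l => α ≤ l)).Nonempty :=
    fun α => ⟨⊤, Finset.mem_filter.mpr ⟨htopΛ, le_top⟩⟩
  set lam : WithTop ℝ → WithTop ℝ := fun α => (Λ.filter (fun l => α ≤ l)).min' (hlamne α)
    with hlamdef
  have hlam1 : ∀ α, α ≤ lam α :=
    fun α => (Finset.mem_filter.mp ((Λ.filter _).min'_mem (hlamne α))).2
  have hlamΛ : ∀ α, lam α ∈ Λ :=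
    fun α => (Finset.mem_filter.mp ((Λ.filter _).min'_mem (hlamne α))).1
  have hlamle : ∀ (α : WithTop ℝ) (u v : V), α ≤ a u v → lam α ≤ a u v := by
    intro α u v h
    exact Finset.min'_le _ _ (Finset.mem_filter.mpr ⟨hmemΛ u v, h⟩)
  have hclslam : ∀ (α : WithTop ℝ) (w : V), cls a α w = cls a (lam α) w := by
    intro α w
    apply Finset.ext
    intro u
    simp only [mem_cls]
    exact ⟨fun h => hlamle α w u h, fun h => le_trans (hlam1 α) h⟩
  set T := Λ.filter (fun l => 0 < l ∧ (X ∩ cls a l i).card ≤ (Y ∩ cls a l i).card) with hT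
  rcases T.eq_empty_or_nonempty with hTe | hTne
  · -- CASE A: every positive level class of i is strictly X-heavy
    have hstrict : ∀ l ∈ Λ, 0 < l → (Y ∩ cls a l i).card < (X ∩ cls a l i).card := by
      intro l hl hl0
      by_contra hcon
      push_neg at hcon
      have : l ∈ T := Finset.mem_filter.mpr ⟨hl, hl0, by omega⟩
      rw [hTe] at this
      exact absurd this (Finset.notMem_empty l)
    have hposne : (Λ.filter (fun l => (0:WithTop ℝ) < l)).Nonempty :=
      ⟨⊤, Finset.mem_filter.mpr ⟨htopΛ, htoppos⟩⟩
    set lv0 := (Λ.filter (fun l => (0:WithTop ℝ) < l)).min' hposne with hlv0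
    have hlv0mem := Finset.mem_filter.mp
      ((Λ.filter (fun l => (0:WithTop ℝ) < l)).min'_mem hposne)
    have hi0 : cls a lv0 i ∈ (Finset.univ : Finset V).image (fun x => cls a lv0 x) :=
      Finset.mem_image.mpr ⟨i, Finset.mem_univ i, rfl⟩
    have hGc : ∀ x ∈ (Finset.univ : Finset V), cls a lv0 x ⊆ Finset.univ :=
      fun x _ => Finset.subset_univ _
    have hXY' : (X ∩ Finset.univ).card ≤ (Y ∩ Finset.univ).card := by
      simpa using hXY.le
    obtain ⟨D, hDP, hDh⟩ := exists_heavy hsym hdiag htri lv0 Finset.univ X Y hGc hXY'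
      (cls a lv0 i) hi0 (hstrict lv0 hlv0mem.1 hlv0mem.2)
    obtain ⟨x', hx'U, rfl⟩ := Finset.mem_image.mp hDP
    obtain ⟨j, hjY, hjX, hjC, hconc⟩ :=
      descent hsym hdiag htri X Y Λ _ lv0 hlv0mem.2 x' le_rfl hDh
    refine ⟨j, hjY, hjX, ?_⟩
    intro α hα
    right
    have h1 : lam α ∈ Λ := hlamΛ α
    have h0 : (0:WithTop ℝ) < lam α := lt_of_lt_of_le hα (hlam1 α)
    constructor
    · rw [hclslam α j]
      exact hconc (lam α) h1 h0 (Finset.min'_le _ _ (Finset.mem_filter.mpr ⟨h1, h0⟩))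
    · rw [hclslam α i]
      exact hstrict (lam α) h1 h0
  · -- CASE B
    set β := T.max' hTne with hβ
    have hβmem := Finset.mem_filter.mp (T.max'_mem hTne)
    have hβΛ : β ∈ Λ := hβmem.1
    have hβpos : (0:WithTop ℝ) < β := hβmem.2.1
    have hXle : (X ∩ cls a β i).card ≤ (Y ∩ cls a β i).card := hβmem.2.2
    have hmaxT : ∀ l ∈ Λ, 0 < l → β < l →
        (Y ∩ cls a l i).card < (X ∩ cls a l i).card := by
      intro l hl hl0 hβl
      by_contra hcon
      push_neg at hcon
      have hlT : l ∈ T := Finset.mem_filter.mpr ⟨hl, hl0, by omega⟩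
      exact absurd (T.le_max' l hlT) (not_le.mpr hβl)
    rcases (Λ.filter (fun l => 0 < l ∧ β < l)).eq_empty_or_nonempty with hHe | hHne
    · -- B2 : β is the top positive level
      have hiXC : i ∈ X ∩ cls a β i := Finset.mem_inter.mpr ⟨hiX, self_mem_cls hdiag⟩
      have hj : ∃ j ∈ Y ∩ cls a β i, j ∉ X := by
        by_contra hcon
        push_neg at hcon
        have hsub : Y ∩ cls a β i ⊆ (X ∩ cls a β i).erase i := by
          intro u hu
          refine Finset.mem_erase.mpr ⟨?_, Finset.mem_inter.mpr
            ⟨hcon u hu, (Finset.mem_inter.mp hu).2⟩⟩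
          intro hui
          subst hui
          exact hiY (Finset.mem_inter.mp hu).1
        have h1 := Finset.card_le_card hsub
        have h2 := Finset.card_erase_of_mem hiXC
        have h3 : 1 ≤ (X ∩ cls a β i).card := Finset.card_pos.mpr ⟨i, hiXC⟩
        omega
      obtain ⟨j, hjmem, hjX⟩ := hj
      obtain ⟨hjY, hjC⟩ := Finset.mem_inter.mp hjmem
      refine ⟨j, hjY, hjX, ?_⟩
      intro α hα
      left
      have haij : β ≤ a i j := mem_cls.mp hjC
      have hlamβ : lam α ≤ β := by
        by_contra hcon
        push_neg at hcon
        have : lam α ∈ Λ.filter (fun l => 0 < l ∧ β < l) :=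
          Finset.mem_filter.mpr ⟨hlamΛ α, lt_of_lt_of_le hα (hlam1 α), hcon⟩
        rw [hHe] at this
        exact absurd this (Finset.notMem_empty _)
      exact le_trans (le_trans (hlam1 α) hlamβ) haij
    · -- B1 : there are levels above β
      set H := Λ.filter (fun l => 0 < l ∧ β < l) with hHdef
      set β' := H.min' hHne with hβ'def
      have hβ'H := Finset.mem_filter.mp (H.min'_mem hHne)
      have hβ'Λ : β' ∈ Λ := hβ'H.1
      have hβ'pos : (0:WithTop ℝ) < β' := hβ'H.2.1
      have hββ' : β < β' := hβ'H.2.2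
      set G := cls a β i with hGdef
      have hGc : ∀ x ∈ G, cls a β' x ⊆ G := by
        intro x hx
        calc cls a β' x ⊆ cls a β x := cls_mono (le_of_lt hββ') x
          _ = G := cls_eq_of_mem hsym htri hx
      have hi0 : cls a β' i ∈ G.image (fun x => cls a β' x) :=
        Finset.mem_image.mpr ⟨i, self_mem_cls hdiag, rfl⟩
      obtain ⟨D, hDP, hDh⟩ := exists_heavy hsym hdiag htri β' G X Y hGc hXle
        (cls a β' i) hi0 (hmaxT β' hβ'Λ hβ'pos hββ')
      obtain ⟨x', hx'G, rfl⟩ := Finset.mem_image.mp hDP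
      obtain ⟨j, hjY, hjX, hjC, hconc⟩ :=
        descent hsym hdiag htri X Y Λ _ β' hβ'pos x' le_rfl hDh
      have hjG : j ∈ G := hGc x' hx'G hjC
      have haij : β ≤ a i j := mem_cls.mp hjG
      refine ⟨j, hjY, hjX, ?_⟩
      intro α hα
      by_cases hle : α ≤ a i j
      · exact Or.inl hle
      · right
        have hβα : β < α := by
          by_contra hcon
          push_neg at hcon
          exact hle (le_trans hcon haij)
        have h1 : lam α ∈ Λ := hlamΛ α
        have h0 : (0:WithTop ℝ) < lam α := lt_of_lt_of_le hα (hlam1 α)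
        have hβlam : β < lam α := lt_of_lt_of_le hβα (hlam1 α)
        constructor
        · rw [hclslam α j]
          exact hconc (lam α) h1 h0 (Finset.min'_le _ _
            (Finset.mem_filter.mpr ⟨h1, h0, hβlam⟩))
        · rw [hclslam α i]
          exact hmaxT (lam α) h1 h0 hβlam

lemma core_exchange {V : Type*} [DecidableEq V] [Fintype V] {a : V → V → WithTop ℝ}
    (hsym : ∀ u v, a u v = a v u) (hdiag : ∀ u, a u u = ⊤)
    (htri : ∀ u v w, min (a u w) (a w v) ≤ a u v) (hpos : ∀ u v, 0 ≤ a u v)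
    (X Y : Finset V) (hXY : X.card = Y.card)
    (i : V) (hiX : i ∈ X) (hiY : i ∉ Y) :
    ∃ j, j ∈ Y ∧ j ∉ X ∧
      ((∑ u ∈ X.erase i, a j u) + (∑ v ∈ Y.erase j, a i v)
        ≤ (∑ u ∈ X.erase i, a i u) + (∑ v ∈ Y.erase j, a j v)) := by
  classical
  obtain ⟨j, hjY, hjX, hj⟩ := jchoice hsym hdiag htri X Y hXY i hiX hiY
  refine ⟨j, hjY, hjX, ?_⟩
  set X' := X.erase i with hX'
  set Y' := Y.erase j with hY'
  have hcount : ∀ α : WithTop ℝ, 0 < α →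
      (X'.filter (fun u => α ≤ a j u)).card + (Y'.filter (fun u => α ≤ a i u)).card ≤
      (X'.filter (fun u => α ≤ a i u)).card + (Y'.filter (fun u => α ≤ a j u)).card := by
    intro α hα
    have hfc : ∀ (S : Finset V) (w : V), S.filter (fun u => α ≤ a w u) = S ∩ cls a α w := by
      intro S w
      apply Finset.ext
      intro u
      simp only [Finset.mem_filter, Finset.mem_inter, mem_cls]
    by_cases hle : α ≤ a i j
    · have hcc : cls a α j = cls a α i := cls_eq_of_mem hsym htri (mem_cls.mpr hle)
      rw [hfc X' j, hfc X' i, hfc Y' j, hfc Y' i, hcc]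
    · have hr := (hj α hα).resolve_left hle
      obtain ⟨h1, h2⟩ := hr
      have hinotj : i ∉ cls a α j := by
        rw [mem_cls, hsym j i]
        exact hle
      have hjnoti : j ∉ cls a α i := by
        rw [mem_cls]
        exact hle
      have hiXC : i ∈ X ∩ cls a α i := Finset.mem_inter.mpr ⟨hiX, self_mem_cls hdiag⟩
      have hjYC : j ∈ Y ∩ cls a α j := Finset.mem_inter.mpr ⟨hjY, self_mem_cls hdiag⟩
      have c1 : (X' ∩ cls a α j).card = (X ∩ cls a α j).card := by
        rw [hX', Finset.erase_inter, Finset.erase_eq_of_notMem]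
        intro hmem
        exact hinotj (Finset.mem_inter.mp hmem).2
      have c2 : (Y' ∩ cls a α i).card = (Y ∩ cls a α i).card := by
        rw [hY', Finset.erase_inter, Finset.erase_eq_of_notMem]
        intro hmem
        exact hjnoti (Finset.mem_inter.mp hmem).2
      have c3 : (X' ∩ cls a α i).card + 1 = (X ∩ cls a α i).card := by
        rw [hX', Finset.erase_inter, Finset.card_erase_of_mem hiXC]
        have : 1 ≤ (X ∩ cls a α i).card := Finset.card_pos.mpr ⟨i, hiXC⟩
        omega
      have c4 : (Y' ∩ cls a α j).card + 1 = (Y ∩ cls a α j).card := by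
        rw [hY', Finset.erase_inter, Finset.card_erase_of_mem hjYC]
        have : 1 ≤ (Y ∩ cls a α j).card := Finset.card_pos.mpr ⟨j, hjYC⟩
        omega
      rw [hfc X' j, hfc X' i, hfc Y' j, hfc Y' i]
      omega
  -- now the multiset argument
  set M₁ : Multiset (WithTop ℝ) := X'.val.map (a j) + Y'.val.map (a i) with hM₁
  set M₂ : Multiset (WithTop ℝ) := X'.val.map (a i) + Y'.val.map (a j) with hM₂
  have hsum : M₁.sum ≤ M₂.sum := by
    apply msum_le_of_counts
    · intro x hx
      rw [hM₁, Multiset.mem_add] at hx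
      rcases hx with hx | hx <;>
      · obtain ⟨u, _, rfl⟩ := Multiset.mem_map.mp hx
        exact hpos _ _
    · intro x hx
      rw [hM₂, Multiset.mem_add] at hx
      rcases hx with hx | hx <;>
      · obtain ⟨u, _, rfl⟩ := Multiset.mem_map.mp hx
        exact hpos _ _
    · intro α hα
      have key : ∀ (S : Finset V) (w : V),
          ((S.val.map (a w)).filter (fun x => α ≤ x)).card
            = (S.filter (fun u => α ≤ a w u)).card := by
        intro S w
        rw [Multiset.filter_map, Multiset.card_map]
        rfl
      rw [hM₁, hM₂, Multiset.filter_add, Multiset.filter_add,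
        Multiset.card_add, Multiset.card_add, key, key, key, key]
      exact hcount α hα
  have e1 : M₁.sum = (∑ u ∈ X', a j u) + (∑ v ∈ Y', a i v) := by
    rw [hM₁, Multiset.sum_add]
    rfl
  have e2 : M₂.sum = (∑ u ∈ X', a i u) + (∑ v ∈ Y', a j v) := by
    rw [hM₂, Multiset.sum_add]
    rfl
  rw [e1, e2] at hsum
  exact hsum

section Inst
variable {r : ℕ} {d : Fin r → ℕ}
  (cb : ∀ i j : Fin r, Fin (d i) → Fin (d j) → WithTop ℝ)

/-- vertex-level binary cost -/
def cbV (u v : (i : Fin r) × Fin (d i)) : WithTop ℝ := cb u.1 v.1 u.2 v.2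

/-- `α`-level edge relation -/
def Ew (α : WithTop ℝ) (u v : (i : Fin r) × Fin (d i)) : Prop :=
  u.1 ≠ v.1 ∧ α ≤ cbV cb u v

variable {cb}

lemma Esymm (hcbs : ∀ i j a b, cb i j a b = cb j i b a) {α : WithTop ℝ}
    {u v : (i : Fin r) × Fin (d i)} (h : Ew cb α u v) : Ew cb α v u := by
  refine ⟨h.1.symm, ?_⟩
  have := h.2
  unfold cbV at this ⊢
  rwa [hcbs u.1 v.1 u.2 v.2] at this

lemma Etri (hcbs : ∀ i j a b, cb i j a b = cb j i b a)
    (hjwp : ∀ i j k : Fin r, i ≠ j → j ≠ k → i ≠ k →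
      ∀ (a : Fin (d i)) (b : Fin (d j)) (c : Fin (d k)),
        min (cb j k b c) (cb i k a c) ≤ cb i j a b)
    {α : WithTop ℝ} {u w v : (i : Fin r) × Fin (d i)}
    (h1 : Ew cb α u w) (h2 : Ew cb α w v) (hne : u.1 ≠ v.1) : Ew cb α u v := by
  refine ⟨hne, ?_⟩
  have hj := hjwp u.1 v.1 w.1 hne (Ne.symm h2.1) h1.1 u.2 v.2 w.2
  have hvw : α ≤ cb v.1 w.1 v.2 w.2 := by
    have := h2.2
    unfold cbV at this
    rwa [hcbs w.1 v.1 w.2 v.2] at this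
  exact le_trans (le_min hvw h1.2) hj

lemma Esq (hzf : ∀ i j : Fin r, i ≠ j → ∀ a b : Fin (d i), a ≠ b →
      ∀ c e : Fin (d j), c ≠ e →
      MinTwice ![cb i j a c, cb i j a e, cb i j b c, cb i j b e])
    {α : WithTop ℝ} {u w p q : (i : Fin r) × Fin (d i)}
    (huw : u.1 = w.1) (hpq : p.1 = q.1) (hneuw : u ≠ w) (hnepq : p ≠ q)
    (hup : Ew cb α u p) (hwp : Ew cb α w p) (hwq : Ew cb α w q) : Ew cb α u q := by
  obtain ⟨ku, au⟩ := u
  obtain ⟨kw, aw⟩ := w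
  obtain ⟨kp, ap⟩ := p
  obtain ⟨kq, aq⟩ := q
  dsimp at huw hpq
  subst huw
  subst hpq
  have haw : au ≠ aw := by
    intro h; subst h; exact hneuw rfl
  have hpqne : ap ≠ aq := by
    intro h; subst h; exact hnepq rfl
  have hne : ku ≠ kp := hup.1
  have hmt := hzf ku kp hne au aw haw ap aq hpqne
  obtain ⟨pp, qq, hppqq, hmin, heq⟩ := hmt
  refine ⟨hne, ?_⟩
  -- the four values
  by_contra hcon
  push_neg at hcon
  -- cb ku kp au aq < α  while the other three are ≥ α
  have h0 : α ≤ cb ku kp au ap := hup.2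
  have h2' : α ≤ cb ku kp aw ap := hwp.2
  have h3' : α ≤ cb ku kp aw aq := hwq.2
  set M : Fin 4 → WithTop ℝ := ![cb ku kp au ap, cb ku kp au aq, cb ku kp aw ap, cb ku kp aw aq] with hM
  have hlt : ∀ t : Fin 4, t ≠ 1 → M 1 < M t := by
    intro t ht
    fin_cases t
    · simpa [hM, cbV] using lt_of_lt_of_le hcon h0
    · exact absurd rfl ht
    · simpa [hM, cbV] using lt_of_lt_of_le hcon h2'
    · simpa [hM, cbV] using lt_of_lt_of_le hcon h3'
  have hpp1 : pp = 1 := by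
    by_contra hppne
    exact absurd (hmin 1) (not_le.mpr (hlt pp hppne))
  subst hpp1
  have hqqne : qq ≠ 1 := Ne.symm hppqq
  have := hlt qq hqqne
  rw [← heq] at this
  exact lt_irrefl _ this

/-- The key connectivity lemma: under JWP and Z-freeness, connected components of the
`α`-level graph are cross-coordinate complete, and same-coordinate vertices in one
component share a common neighbour. -/
lemma connect (hcbs : ∀ i j a b, cb i j a b = cb j i b a)
    (hjwp : ∀ i j k : Fin r, i ≠ j → j ≠ k → i ≠ k →
      ∀ (a : Fin (d i)) (b : Fin (d j)) (c : Fin (d k)),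
        min (cb j k b c) (cb i k a c) ≤ cb i j a b)
    (hzf : ∀ i j : Fin r, i ≠ j → ∀ a b : Fin (d i), a ≠ b →
      ∀ c e : Fin (d j), c ≠ e →
      MinTwice ![cb i j a c, cb i j a e, cb i j b c, cb i j b e])
    {α : WithTop ℝ} {u v : (i : Fin r) × Fin (d i)}
    (h : Relation.ReflTransGen (Ew cb α) u v) :
    (u.1 ≠ v.1 → Ew cb α u v) ∧
    (u.1 = v.1 → u = v ∨ ∃ w, Ew cb α u w ∧ Ew cb α v w) := by
  induction h with
  | refl => exact ⟨fun h => absurd rfl h, fun _ => Or.inl rfl⟩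
  | @tail b c hub hbc ih =>
    by_cases hub1 : u.1 = b.1
    · rcases ih.2 hub1 with rfl | ⟨w, huw, hbw⟩
      · exact ⟨fun _ => hbc, fun h1 => absurd h1 hbc.1⟩
      · by_cases hune : u = b
        · subst hune
          exact ⟨fun _ => hbc, fun h1 => absurd h1 hbc.1⟩
        · by_cases hcw : c.1 = w.1
          · by_cases hcweq : c = w
            · subst hcweq
              exact ⟨fun _ => huw, fun h1 => absurd h1 huw.1⟩
            · have huc : Ew cb α u c := by
                refine Esq hzf hub1 (hcw.symm) hune (Ne.symm hcweq) huw hbw hbc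
              refine ⟨fun _ => huc, fun h1 => absurd h1 ?_⟩
              intro
              exact huc.1 ‹_›
          · have hwc : Ew cb α w c := by
              refine Etri hcbs hjwp (Esymm hcbs hbw) hbc ?_
              intro hh
              exact hcw hh.symm
            have huc : Ew cb α u c := by
              refine Etri hcbs hjwp huw hwc ?_
              intro hh
              rw [hub1] at hh
              exact hbc.1 hh
            exact ⟨fun _ => huc, fun h1 => absurd h1 huc.1⟩
    · have hub : Ew cb α u b := ih.1 hub1
      by_cases hcu : c.1 = u.1
      · exact ⟨fun h => absurd hcu.symm h,
          fun _ => Or.inr ⟨b, hub, Esymm hcbs hbc⟩⟩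
      · have huc : Ew cb α u c := by
          refine Etri hcbs hjwp hub hbc (fun h => hcu h.symm)
        exact ⟨fun _ => huc, fun h1 => absurd h1 huc.1⟩
end Inst

section Av
variable {r : ℕ} {d : Fin r → ℕ}
  (cb : ∀ i j : Fin r, Fin (d i) → Fin (d j) → WithTop ℝ)

/-- joining level of two same-coordinate vertices -/
noncomputable def qv (u v : (i : Fin r) × Fin (d i)) : WithTop ℝ :=
  Finset.fold max 0 (fun w => min (cbV cb u w) (cbV cb v w))
    (Finset.univ.filter (fun w : (i : Fin r) × Fin (d i) => w.1 ≠ u.1))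

/-- the completed (ultrametric-like) cost on vertices -/
noncomputable def av (u v : (i : Fin r) × Fin (d i)) : WithTop ℝ :=
  if u = v then ⊤ else if u.1 = v.1 then qv cb u v else cbV cb u v

variable {cb}

lemma av_diag (u : (i : Fin r) × Fin (d i)) : av cb u u = ⊤ := by simp [av]

lemma av_nonneg (hcb0 : ∀ i j a b, 0 ≤ cb i j a b) (u v : (i : Fin r) × Fin (d i)) :
    0 ≤ av cb u v := by
  unfold av
  split
  · exact le_top
  · split
    · unfold qv
      rw [Finset.le_fold_max]
      exact Or.inl le_rfl
    · exact hcb0 _ _ _ _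

lemma qv_symm (hcbs : ∀ i j a b, cb i j a b = cb j i b a)
    {u v : (i : Fin r) × Fin (d i)} (h : u.1 = v.1) : qv cb u v = qv cb v u := by
  unfold qv
  rw [h]
  congr 1
  funext w
  rw [min_comm]

lemma av_symm (hcbs : ∀ i j a b, cb i j a b = cb j i b a)
    (u v : (i : Fin r) × Fin (d i)) : av cb u v = av cb v u := by
  unfold av
  by_cases h : u = v
  · simp [h]
  · rw [if_neg h, if_neg (Ne.symm h)]
    by_cases h1 : u.1 = v.1
    · rw [if_pos h1, if_pos h1.symm, qv_symm hcbs h1]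
    · rw [if_neg h1, if_neg (fun hh => h1 hh.symm)]
      unfold cbV
      rw [hcbs u.1 v.1 u.2 v.2]

lemma av_ge_iff (hcbs : ∀ i j a b, cb i j a b = cb j i b a)
    (hjwp : ∀ i j k : Fin r, i ≠ j → j ≠ k → i ≠ k →
      ∀ (a : Fin (d i)) (b : Fin (d j)) (c : Fin (d k)),
        min (cb j k b c) (cb i k a c) ≤ cb i j a b)
    (hzf : ∀ i j : Fin r, i ≠ j → ∀ a b : Fin (d i), a ≠ b →
      ∀ c e : Fin (d j), c ≠ e →
      MinTwice ![cb i j a c, cb i j a e, cb i j b c, cb i j b e])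
    {α : WithTop ℝ} (hα : 0 < α) (u v : (i : Fin r) × Fin (d i)) :
    α ≤ av cb u v ↔ (u = v ∨ Relation.ReflTransGen (Ew cb α) u v) := by
  constructor
  · intro h
    by_cases huv : u = v
    · exact Or.inl huv
    · right
      rw [av, if_neg huv] at h
      by_cases h1 : u.1 = v.1
      · rw [if_pos h1] at h
        unfold qv at h
        rw [Finset.le_fold_max] at h
        rcases h with h | ⟨w, hw, hmin⟩
        · exact absurd h (not_le.mpr hα)
        · have hwu : w.1 ≠ u.1 := (Finset.mem_filter.mp hw).2
          have huw : Ew cb α u w := ⟨Ne.symm hwu, le_trans hmin (min_le_left _ _)⟩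
          have hvw : Ew cb α v w := by
            refine ⟨?_, le_trans hmin (min_le_right _ _)⟩
            rw [← h1]
            exact Ne.symm hwu
          exact (Relation.ReflTransGen.single huw).tail (Esymm hcbs hvw)
      · rw [if_neg h1] at h
        exact Relation.ReflTransGen.single ⟨h1, h⟩
  · intro h
    rcases h with rfl | hK
    · rw [av_diag]; exact le_top
    · by_cases huv : u = v
      · subst huv; rw [av_diag]; exact le_top
      · have hc := connect hcbs hjwp hzf hK
        rw [av, if_neg huv]
        by_cases h1 : u.1 = v.1
        · rw [if_pos h1]
          rcases hc.2 h1 with rfl | ⟨w, huw, hvw⟩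
          · exact absurd rfl huv
          · unfold qv
            rw [Finset.le_fold_max]
            right
            exact ⟨w, Finset.mem_filter.mpr ⟨Finset.mem_univ w, Ne.symm huw.1⟩,
              le_min huw.2 hvw.2⟩
        · rw [if_neg h1]
          exact (hc.1 h1).2

lemma av_tri (hcbs : ∀ i j a b, cb i j a b = cb j i b a)
    (hcb0 : ∀ i j a b, 0 ≤ cb i j a b)
    (hjwp : ∀ i j k : Fin r, i ≠ j → j ≠ k → i ≠ k →
      ∀ (a : Fin (d i)) (b : Fin (d j)) (c : Fin (d k)),
        min (cb j k b c) (cb i k a c) ≤ cb i j a b)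
    (hzf : ∀ i j : Fin r, i ≠ j → ∀ a b : Fin (d i), a ≠ b →
      ∀ c e : Fin (d j), c ≠ e →
      MinTwice ![cb i j a c, cb i j a e, cb i j b c, cb i j b e])
    (u v w : (i : Fin r) × Fin (d i)) :
    min (av cb u w) (av cb w v) ≤ av cb u v := by
  by_cases huv : u = v
  · subst huv; rw [av_diag]; exact le_top
  set m := min (av cb u w) (av cb w v) with hm
  rcases le_or_gt m 0 with h0 | h0
  · exact le_trans h0 (av_nonneg hcb0 u v)
  · have h1 : m ≤ av cb u w := min_le_left _ _
    have h2 : m ≤ av cb w v := min_le_right _ _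
    rw [av_ge_iff hcbs hjwp hzf h0] at h1 h2
    rw [av_ge_iff hcbs hjwp hzf h0]
    right
    rcases h1 with rfl | hK1
    · rcases h2 with rfl | hK2
      · exact absurd rfl huv
      · exact hK2
    · rcases h2 with rfl | hK2
      · exact hK1
      · exact hK1.trans hK2
end Av

noncomputable def half (x : WithTop ℝ) : WithTop ℝ := WithTop.map (fun t : ℝ => t / 2) x

lemma half_top : half ⊤ = ⊤ := rfl

lemma half_add (x y : WithTop ℝ) : half (x + y) = half x + half y := by
  induction x using WithTop.recTopCoe with
  | top => simp [half]
  | coe t =>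
    induction y using WithTop.recTopCoe with
    | top => simp [half]
    | coe s =>
      rw [← WithTop.coe_add]
      unfold half
      rw [WithTop.map_coe, WithTop.map_coe, WithTop.map_coe, ← WithTop.coe_add]
      congr 1
      ring

lemma half_mono {x y : WithTop ℝ} (h : x ≤ y) : half x ≤ half y := by
  induction y using WithTop.recTopCoe with
  | top => exact le_top
  | coe s =>
    induction x using WithTop.recTopCoe with
    | top => exact absurd h (by simp)
    | coe t =>
      unfold half
      rw [WithTop.map_coe, WithTop.map_coe, WithTop.coe_le_coe]
      rw [WithTop.coe_le_coe] at h
      linarith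

lemma half_double (x : WithTop ℝ) : half (x + x) = x := by
  induction x using WithTop.recTopCoe with
  | top => simp [half]
  | coe t =>
    rw [← WithTop.coe_add]
    unfold half
    rw [WithTop.map_coe]
    norm_num

/-- the (doubled) quadratic part -/
noncomputable def AS {V : Type*} [DecidableEq V] (a : V → V → WithTop ℝ)
    (S : Finset V) : WithTop ℝ :=
  ∑ u ∈ S, ∑ v ∈ S.erase u, a u v

lemma AS_insert {V : Type*} [DecidableEq V] (a : V → V → WithTop ℝ)
    {S : Finset V} {w : V} (hw : w ∉ S) :
    AS a (insert w S) = AS a S + ((∑ v ∈ S, a w v) + (∑ v ∈ S, a v w)) := by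
  unfold AS
  rw [Finset.sum_insert hw, Finset.erase_insert hw]
  have hinner : ∀ u ∈ S, ∑ v ∈ (insert w S).erase u, a u v
      = a u w + ∑ v ∈ S.erase u, a u v := by
    intro u hu
    have hne : w ≠ u := fun h => hw (h ▸ hu)
    rw [Finset.erase_insert_of_ne hne]
    exact Finset.sum_insert (fun hmem => hw (Finset.mem_of_mem_erase hmem))
  rw [Finset.sum_congr rfl hinner, Finset.sum_add_distrib]
  abel

/-- abstract M♮-convexity of the cardinality-layer quadratic function -/
lemma g2_mnat {V : Type*} [DecidableEq V] [Fintype V] (a : V → V → WithTop ℝ)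
    (hsym : ∀ u v, a u v = a v u) (hdiag : ∀ u, a u u = ⊤)
    (htri : ∀ u v w, min (a u w) (a w v) ≤ a u v) (hpos : ∀ u v, 0 ≤ a u v)
    (N : ℕ) (g : Finset V → WithTop ℝ)
    (hg : ∀ S, g S = if S.card = N then half (AS a S) else ⊤) :
    ∀ X Y : Finset V, ∀ i ∈ X \ Y,
      (g (X.erase i) + g (insert i Y) ≤ g X + g Y) ∨
      (∃ j ∈ Y \ X, g (insert j (X.erase i)) + g ((insert i Y).erase j) ≤ g X + g Y) := by
  intro X Y i hi
  obtain ⟨hiX, hiY⟩ := Finset.mem_sdiff.mp hi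
  by_cases hX : X.card = N
  · by_cases hY : Y.card = N
    · -- main case
      obtain ⟨j, hjY, hjX, hcore⟩ := core_exchange hsym hdiag htri hpos X Y
        (hX.trans hY.symm) i hiX hiY
      right
      refine ⟨j, Finset.mem_sdiff.mpr ⟨hjY, hjX⟩, ?_⟩
      set X' := X.erase i with hX'
      set Y' := Y.erase j with hY'
      have hNpos : 1 ≤ N := by
        rw [← hX]
        exact Finset.card_pos.mpr ⟨i, hiX⟩
      have hjX' : j ∉ X' := fun h => hjX (Finset.mem_of_mem_erase h)
      have hiY' : i ∉ Y' := fun h => hiY (Finset.mem_of_mem_erase h)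
      have hcard1 : (insert j X').card = N := by
        rw [Finset.card_insert_of_notMem hjX', hX', Finset.card_erase_of_mem hiX, hX]
        omega
      have hins : (insert i Y).erase j = insert i Y' := by
        rw [hY', Finset.erase_insert_of_ne (fun h => hiY (by rw [h]; exact hjY))]
      have hcard2 : ((insert i Y).erase j).card = N := by
        rw [hins, Finset.card_insert_of_notMem hiY', hY',
          Finset.card_erase_of_mem hjY, hY]
        omega
      rw [hg, hg, hg, hg, if_pos hX, if_pos hY, if_pos hcard1, if_pos hcard2, hins]
      -- expand AS
      have eX : AS a X = AS a X' + ((∑ v ∈ X', a i v) + (∑ v ∈ X', a v i)) := by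
        rw [← AS_insert a (Finset.notMem_erase i X), Finset.insert_erase hiX]
      have eY : AS a Y = AS a Y' + ((∑ v ∈ Y', a j v) + (∑ v ∈ Y', a v j)) := by
        rw [← AS_insert a (Finset.notMem_erase j Y), Finset.insert_erase hjY]
      have e1 : AS a (insert j X') = AS a X' + ((∑ v ∈ X', a j v) + (∑ v ∈ X', a v j)) :=
        AS_insert a hjX'
      have e2 : AS a (insert i Y') = AS a Y' + ((∑ v ∈ Y', a i v) + (∑ v ∈ Y', a v i)) :=
        AS_insert a hiY'
      have hsv : ∀ (S : Finset V) (w : V), ∑ v ∈ S, a v w = ∑ v ∈ S, a w v := by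
        intro S w
        exact Finset.sum_congr rfl (fun v _ => hsym v w)
      rw [← half_add, ← half_add]
      apply half_mono
      rw [e1, e2, eX, eY, hsv X' j, hsv X' i, hsv Y' j, hsv Y' i]
      have hrw : ∀ A B C D : WithTop ℝ, (A + (B + B)) + (C + (D + D))
          = (A + C) + ((B + D) + (B + D)) := by
        intro A B C D
        abel
      rw [hrw, hrw]
      gcongr
    · left
      rw [hg Y, if_neg hY, add_top]
      exact le_top
  · left
    rw [hg X, if_neg hX, top_add]
    exact le_top

section G1
variable {r : ℕ} {d : Fin r → ℕ}

/-- at most one chosen value per coordinate -/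
def PartialT (S : Finset ((i : Fin r) × Fin (d i))) : Prop :=
  ∀ k : Fin r, (S.filter (fun u => u.1 = k)).card ≤ 1

lemma g1_mnat (cu : ∀ i : Fin r, Fin (d i) → ℝ)
    (g : Finset ((i : Fin r) × Fin (d i)) → WithTop ℝ)
    (hg : ∀ S, g S = if PartialT S then ∑ u ∈ S, ((cu u.1 u.2 : ℝ) : WithTop ℝ) else ⊤) :
    ∀ X Y : Finset ((i : Fin r) × Fin (d i)), ∀ i ∈ X \ Y,
      (g (X.erase i) + g (insert i Y) ≤ g X + g Y) ∨
      (∃ j ∈ Y \ X, g (insert j (X.erase i)) + g ((insert i Y).erase j) ≤ g X + g Y) := by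
  classical
  intro X Y u₀ hu₀
  obtain ⟨hu₀X, hu₀Y⟩ := Finset.mem_sdiff.mp hu₀
  by_cases hPX : PartialT X
  · by_cases hPY : PartialT Y
    · set k := u₀.1 with hk
      have hu₀fX : u₀ ∈ X.filter (fun u => u.1 = k) :=
        Finset.mem_filter.mpr ⟨hu₀X, rfl⟩
      rcases (Y.filter (fun u => u.1 = k)).eq_empty_or_nonempty with hfe | hfne
      · -- first disjunct
        left
        have hP1 : PartialT (X.erase u₀) := by
          intro k'
          rw [Finset.filter_erase]
          exact le_trans (Finset.card_le_card (Finset.erase_subset _ _)) (hPX k')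
        have hP2 : PartialT (insert u₀ Y) := by
          intro k'
          rw [Finset.filter_insert]
          by_cases hkk : u₀.1 = k'
          · rw [if_pos hkk]
            rw [← hkk, ← hk, hfe]
            simp
          · rw [if_neg hkk]
            exact hPY k'
        rw [hg, hg, hg, hg, if_pos hP1, if_pos hP2, if_pos hPX, if_pos hPY]
        rw [Finset.sum_insert hu₀Y]
        rw [← Finset.add_sum_erase X _ hu₀X]
        exact le_of_eq (by abel)
      · -- second disjunct, exchange with the coordinate-k element of Y
        obtain ⟨w, hwf⟩ := hfne
        obtain ⟨hwY, hwk⟩ := Finset.mem_filter.mp hwf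
        have hwu₀ : w ≠ u₀ := fun h => hu₀Y (h ▸ hwY)
        have hwX : w ∉ X := by
          intro hwX
          have hwfX : w ∈ X.filter (fun u => u.1 = k) := Finset.mem_filter.mpr ⟨hwX, hwk⟩
          have : 1 < (X.filter (fun u => u.1 = k)).card :=
            Finset.one_lt_card.mpr ⟨u₀, hu₀fX, w, hwfX, Ne.symm hwu₀⟩
          have := hPX k
          omega
        right
        refine ⟨w, Finset.mem_sdiff.mpr ⟨hwY, hwX⟩, ?_⟩
        have hXfk : X.filter (fun u => u.1 = k) = {u₀} := by
          have h1 : 1 ≤ (X.filter (fun u => u.1 = k)).card :=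
            Finset.card_pos.mpr ⟨u₀, hu₀fX⟩
          have h2 := hPX k
          have h3 : (X.filter (fun u => u.1 = k)).card = 1 := by omega
          obtain ⟨z, hz⟩ := Finset.card_eq_one.mp h3
          rw [hz] at hu₀fX
          rw [hz, Finset.mem_singleton.mp hu₀fX]
        have hYfk : Y.filter (fun u => u.1 = k) = {w} := by
          have h1 : 1 ≤ (Y.filter (fun u => u.1 = k)).card :=
            Finset.card_pos.mpr ⟨w, hwf⟩
          have h2 := hPY k
          have h3 : (Y.filter (fun u => u.1 = k)).card = 1 := by omega
          obtain ⟨z, hz⟩ := Finset.card_eq_one.mp h3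
          rw [hz] at hwf
          rw [hz, Finset.mem_singleton.mp hwf]
        have hP1 : PartialT (insert w (X.erase u₀)) := by
          intro k'
          rw [Finset.filter_insert]
          by_cases hkk : w.1 = k'
          · rw [if_pos hkk]
            rw [Finset.filter_erase, ← hkk, hwk, hXfk]
            simp
          · rw [if_neg hkk, Finset.filter_erase]
            exact le_trans (Finset.card_le_card (Finset.erase_subset _ _)) (hPX k')
        have hP2 : PartialT ((insert u₀ Y).erase w) := by
          intro k'
          rw [Finset.filter_erase, Finset.filter_insert]
          by_cases hkk : u₀.1 = k'
          · rw [if_pos hkk]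
            rw [← hkk, ← hk, hYfk]
            have : (insert u₀ ({w} : Finset ((i : Fin r) × Fin (d i)))).erase w = {u₀} := by
              rw [Finset.erase_insert_of_ne (Ne.symm hwu₀)]
              simp
            rw [this]
            simp
          · rw [if_neg hkk]
            exact le_trans (Finset.card_le_card (Finset.erase_subset _ _)) (hPY k')
        rw [hg, hg, hg, hg, if_pos hP1, if_pos hP2, if_pos hPX, if_pos hPY]
        have hwX' : w ∉ X.erase u₀ := fun h => hwX (Finset.mem_of_mem_erase h)
        have hins : (insert u₀ Y).erase w = insert u₀ (Y.erase w) :=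
          Finset.erase_insert_of_ne (Ne.symm hwu₀)
        have hu₀Y' : u₀ ∉ Y.erase w := fun h => hu₀Y (Finset.mem_of_mem_erase h)
        rw [Finset.sum_insert hwX', hins, Finset.sum_insert hu₀Y']
        rw [← Finset.add_sum_erase X _ hu₀X, ← Finset.add_sum_erase Y _ hwY]
        exact le_of_eq (by abel)
    · left
      rw [hg Y, if_neg hPY, add_top]
      exact le_top
  · left
    rw [hg X, if_neg hPX, top_add]
    exact le_top
end G1

section Enc
variable {r : ℕ} {d : Fin r → ℕ}

lemma enc_g_inj (x : ∀ i : Fin r, Fin (d i)) :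
    Function.Injective (fun i : Fin r => (⟨i, x i⟩ : (i : Fin r) × Fin (d i))) := by
  intro i j h
  exact congrArg Sigma.fst h

lemma enc_card (x : ∀ i : Fin r, Fin (d i)) : (enc r d x).card = r := by
  unfold enc
  rw [Finset.card_image_of_injective _ (enc_g_inj x), Finset.card_univ, Fintype.card_fin]

lemma enc_fiber (x : ∀ i : Fin r, Fin (d i)) (k : Fin r) :
    (enc r d x).filter (fun u => u.1 = k) = {⟨k, x k⟩} := by
  apply Finset.ext
  intro u
  simp only [Finset.mem_filter, Finset.mem_singleton]
  constructor
  · rintro ⟨hu, hk⟩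
    obtain ⟨i, _, rfl⟩ := Finset.mem_image.mp hu
    subst hk
    rfl
  · rintro rfl
    exact ⟨Finset.mem_image.mpr ⟨k, Finset.mem_univ k, rfl⟩, rfl⟩

lemma enc_partial (x : ∀ i : Fin r, Fin (d i)) : PartialT (enc r d x) := by
  intro k
  rw [enc_fiber]
  simp

lemma enc_injective : Function.Injective (enc r d) := by
  intro x y h
  funext i
  have hx := enc_fiber x i
  have hy := enc_fiber y i
  rw [h, hy] at hx
  have : (⟨i, y i⟩ : (i : Fin r) × Fin (d i)) = ⟨i, x i⟩ := by
    rw [← Finset.mem_singleton, ← hx]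
    simp
  obtain ⟨-, h2⟩ := Sigma.mk.inj_iff.mp this
  exact (eq_of_heq h2).symm

lemma exists_enc {S : Finset ((i : Fin r) × Fin (d i))}
    (hcard : S.card = r) (hP : PartialT S) : ∃ x, enc r d x = S := by
  classical
  have hsum : S.card = ∑ k : Fin r, (S.filter (fun u => u.1 = k)).card := by
    exact Finset.card_eq_sum_card_fiberwise (fun u _ => Finset.mem_univ u.1)
  have hall : ∀ k : Fin r, (S.filter (fun u => u.1 = k)).card = 1 := by
    by_contra hcon
    push_neg at hcon
    obtain ⟨k₀, hk₀⟩ := hcon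
    have hlt : ∑ k : Fin r, (S.filter (fun u => u.1 = k)).card
        < ∑ _k : Fin r, 1 := by
      apply Finset.sum_lt_sum
      · intro k _; exact hP k
      · exact ⟨k₀, Finset.mem_univ k₀, lt_of_le_of_ne (hP k₀) hk₀⟩
    simp only [Finset.sum_const, Finset.card_univ, Fintype.card_fin, smul_eq_mul,
      mul_one] at hlt
    omega
  have hz : ∀ k : Fin r, ∃ b : Fin (d k), S.filter (fun u => u.1 = k) = {⟨k, b⟩} := by
    intro k
    obtain ⟨z, hzk⟩ := Finset.card_eq_one.mp (hall k)
    have hzmem : z ∈ S.filter (fun u => u.1 = k) := by rw [hzk]; simp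
    have hz1 : z.1 = k := (Finset.mem_filter.mp hzmem).2
    obtain ⟨kz, bz⟩ := z
    dsimp at hz1
    subst hz1
    exact ⟨bz, hzk⟩
  choose x hx using hz
  refine ⟨x, ?_⟩
  apply Finset.ext
  intro u
  constructor
  · intro hu
    obtain ⟨i, _, rfl⟩ := Finset.mem_image.mp hu
    have : (⟨i, x i⟩ : (i : Fin r) × Fin (d i)) ∈ S.filter (fun u => u.1 = i) := by
      rw [hx i]; simp
    exact (Finset.mem_filter.mp this).1
  · intro hu
    have : u ∈ S.filter (fun v => v.1 = u.1) := Finset.mem_filter.mpr ⟨hu, rfl⟩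
    rw [hx u.1, Finset.mem_singleton] at this
    rw [this]
    exact Finset.mem_image.mpr ⟨u.1, Finset.mem_univ _, rfl⟩
end Enc

section Split
variable {r : ℕ} {d : Fin r → ℕ}

lemma fval_split (cu : ∀ i : Fin r, Fin (d i) → ℝ)
    (cb : ∀ i j : Fin r, Fin (d i) → Fin (d j) → WithTop ℝ)
    (hcbs : ∀ i j a b, cb i j a b = cb j i b a)
    (x : ∀ i : Fin r, Fin (d i)) :
    fval r d cu cb x =
      (∑ u ∈ enc r d x, ((cu u.1 u.2 : ℝ) : WithTop ℝ))
        + half (AS (av cb) (enc r d x)) := by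
  classical
  have hinj' : ∀ s : Finset (Fin r), ∀ i ∈ s, ∀ j ∈ s,
      (⟨i, x i⟩ : (i : Fin r) × Fin (d i)) = ⟨j, x j⟩ → i = j :=
    fun s i _ j _ h => enc_g_inj x h
  have hunary : (∑ u ∈ enc r d x, ((cu u.1 u.2 : ℝ) : WithTop ℝ))
      = ∑ i : Fin r, ((cu i (x i) : ℝ) : WithTop ℝ) := by
    unfold enc
    rw [Finset.sum_image (hinj' Finset.univ)]
  set P := ∑ p ∈ (Finset.univ ×ˢ Finset.univ : Finset (Fin r × Fin r)).filter
      (fun p => p.1 < p.2), cb p.1 p.2 (x p.1) (x p.2) with hP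
  have hAS : AS (av cb) (enc r d x) = P + P := by
    have step1 : AS (av cb) (enc r d x)
        = ∑ i : Fin r, ∑ j ∈ Finset.univ.erase i, cb i j (x i) (x j) := by
      unfold AS enc
      rw [Finset.sum_image (hinj' Finset.univ)]
      apply Finset.sum_congr rfl
      intro i _
      rw [← Finset.image_erase (enc_g_inj x) Finset.univ i]
      rw [Finset.sum_image (hinj' (Finset.univ.erase i))]
      apply Finset.sum_congr rfl
      intro j hj
      have hij : j ≠ i := Finset.ne_of_mem_erase hj
      have hne : (⟨i, x i⟩ : (i : Fin r) × Fin (d i)) ≠ ⟨j, x j⟩ := by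
        intro h
        exact hij (congrArg Sigma.fst h).symm
      rw [av, if_neg hne, if_neg (fun h => hij (h.symm : j = i))]
      rfl
    have step2 : ∀ i : Fin r, ∑ j ∈ Finset.univ.erase i, cb i j (x i) (x j)
        = ∑ j : Fin r, (if j = i then 0 else cb i j (x i) (x j)) := by
      intro i
      rw [← Finset.add_sum_erase Finset.univ
        (fun j => if j = i then 0 else cb i j (x i) (x j)) (Finset.mem_univ i)]
      rw [if_pos rfl, zero_add]
      apply Finset.sum_congr rfl
      intro j hj
      rw [if_neg (Finset.ne_of_mem_erase hj)]
    have step3 : ∀ i j : Fin r, (if j = i then 0 else cb i j (x i) (x j))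
        = (if i < j then cb i j (x i) (x j) else 0)
          + (if j < i then cb i j (x i) (x j) else 0) := by
      intro i j
      rcases lt_trichotomy i j with h | h | h
      · rw [if_neg (ne_of_gt h), if_pos h, if_neg (not_lt.mpr h.le), add_zero]
      · subst h
        simp
      · rw [if_neg (ne_of_lt h), if_neg (not_lt.mpr h.le), if_pos h, zero_add]
    have hPP : P = ∑ i : Fin r, ∑ j : Fin r,
        (if i < j then cb i j (x i) (x j) else 0) := by
      rw [hP, Finset.sum_filter, Finset.sum_product]
    have hPP' : P = ∑ i : Fin r, ∑ j : Fin r,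
        (if j < i then cb i j (x i) (x j) else 0) := by
      rw [hPP, Finset.sum_comm]
      apply Finset.sum_congr rfl
      intro i _
      apply Finset.sum_congr rfl
      intro j _
      by_cases h : j < i
      · rw [if_pos h, if_pos h, hcbs j i (x j) (x i)]
      · rw [if_neg h, if_neg h]
    calc AS (av cb) (enc r d x)
        = ∑ i : Fin r, ∑ j : Fin r, (if j = i then 0 else cb i j (x i) (x j)) := by
          rw [step1]; exact Finset.sum_congr rfl (fun i _ => step2 i)
      _ = (∑ i : Fin r, ∑ j : Fin r, (if i < j then cb i j (x i) (x j) else 0))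
          + (∑ i : Fin r, ∑ j : Fin r, (if j < i then cb i j (x i) (x j) else 0)) := by
          rw [← Finset.sum_add_distrib]
          apply Finset.sum_congr rfl
          intro i _
          rw [← Finset.sum_add_distrib]
          exact Finset.sum_congr rfl (fun j _ => step3 i j)
      _ = P + P := by rw [← hPP, ← hPP']
  rw [hAS, half_double, hunary]
  rfl
end Split

/-- If `f(x) = Σ_i c_i(x_i) + Σ_{i<j} c_{ij}(x_i,x_j)` (nonnegative costs) satisfies the
joint winner property and is Z-free, then `f̂` is M♮₂-convex: it is the sum of two
M♮-convex functions on `{0,1}^U`. -/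
theorem stmt10 (r : ℕ) (d : Fin r → ℕ) (hd : ∀ i, 2 ≤ d i)
    (cu : ∀ i : Fin r, Fin (d i) → ℝ) (hcu : ∀ i a, 0 ≤ cu i a)
    (cb : ∀ i j : Fin r, Fin (d i) → Fin (d j) → WithTop ℝ)
    (hcb0 : ∀ i j a b, 0 ≤ cb i j a b)
    (hcbs : ∀ i j a b, cb i j a b = cb j i b a)
    (hjwp : JWP r d cb) (hzf : ZFree r d cb) :
    ∃ g₁ g₂ : Finset ((i : Fin r) × Fin (d i)) → WithTop ℝ,
      MnatConvex g₁ ∧ MnatConvex g₂ ∧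
      ∀ S : Finset ((i : Fin r) × Fin (d i)), fhat r d cu cb S = g₁ S + g₂ S := by
  classical
  refine ⟨(fun S => if PartialT S then ∑ u ∈ S, ((cu u.1 u.2 : ℝ) : WithTop ℝ) else ⊤),
          (fun S => if S.card = r then half (AS (av cb) S) else ⊤), ?_, ?_, ?_⟩
  · intro X Y i hi
    exact g1_mnat cu _ (fun S => rfl) X Y i hi
  · intro X Y i hi
    exact g2_mnat (av cb) (av_symm hcbs) av_diag (av_tri hcbs hcb0 hjwp hzf)
      (av_nonneg hcb0) r _ (fun S => rfl) X Y i hi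
  · intro S
    by_cases h : ∃ x : ∀ i : Fin r, Fin (d i), enc r d x = S
    · simp only [fhat]
      rw [dif_pos h]
      have hspec := h.choose_spec
      rw [fval_split cu cb hcbs h.choose, hspec]
      rw [if_pos (hspec ▸ enc_partial h.choose), if_pos (hspec ▸ enc_card h.choose)]
    · simp only [fhat]
      rw [dif_neg h]
      by_cases h1 : PartialT S
      · by_cases h2 : S.card = r
        · exact absurd (exists_enc h2 h1) h
        · rw [if_neg h2, add_top]
      · rw [if_neg h1, top_add]
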